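/- Let φ_1,…,φ_n be a multiplicative system of random variables with A_k ≤ φ_k ≤ B_k almost surely, where A_k < 0 < B_k. Then for every λ > 0 one has P(∑_{k=1}^n φ_k > λ) ≤ exp(−2λ² / ∑_{k=1}^n (B_k − A_k)²). -/

import Mathlib

open MeasureTheory


open Real

lemma hoeff_D_pos {p : ℝ} (hp0 : 0 ≤ p) (hp1 : p ≤ 1) (h : ℝ) :
    0 < 1 - p + p * Real.exp h := by
  rcases eq_or_lt_of_le hp1 with rfl | hp1
  · simpa using Real.exp_pos h
  · have := mul_nonneg hp0 (Real.exp_pos h).le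
    linarith

lemma hoeff_core {p : ℝ} (hp0 : 0 ≤ p) (hp1 : p ≤ 1) {h : ℝ} (hh : 0 ≤ h) :
    Real.exp (-(p * h)) * (1 - p + p * Real.exp h) ≤ Real.exp (h ^ 2 / 8) := by
  set D : ℝ → ℝ := fun x => 1 - p + p * Real.exp x with hDdef
  have hD : ∀ x, 0 < D x := fun x => hoeff_D_pos hp0 hp1 x
  have hDderiv : ∀ x, HasDerivAt D (p * Real.exp x) x := fun x =>
    (((Real.hasDerivAt_exp x).const_mul p).const_add (1 - p))
  -- g = derivative of f
  set g : ℝ → ℝ := fun x => x / 4 + p - p * Real.exp x / D x with hgdef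
  have hgderiv : ∀ x, HasDerivAt g
      (1 / 4 - (p * Real.exp x * D x - p * Real.exp x * (p * Real.exp x)) / (D x) ^ 2) x := by
    intro x
    have h1 : HasDerivAt (fun y : ℝ => y / 4 + p) (1 / 4) x := by
      simpa using ((hasDerivAt_id x).div_const 4).add_const p
    exact h1.sub ((((Real.hasDerivAt_exp x).const_mul p).div (hDderiv x) (hD x).ne'))
  have hg'_nonneg : ∀ x, 0 ≤ 1 / 4 -
      (p * Real.exp x * D x - p * Real.exp x * (p * Real.exp x)) / (D x) ^ 2 := by
    intro x
    rw [sub_nonneg, div_le_iff₀ (pow_pos (hD x) 2)]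
    have hE := (Real.exp_pos x).le
    have : (1 - p - p * Real.exp x) ^ 2 ≥ 0 := sq_nonneg _
    simp only [hDdef]
    nlinarith [mul_nonneg hp0 hE]
  have hgmono : Monotone g :=
    monotone_of_hasDerivAt_nonneg hgderiv (fun x => hg'_nonneg x)
  have hg0 : g 0 = 0 := by
    simp [hgdef, hDdef, Real.exp_zero]
  have hg_nonneg : ∀ x, 0 ≤ x → 0 ≤ g x := fun x hx => hg0 ▸ hgmono hx
  -- f
  set f : ℝ → ℝ := fun x => x ^ 2 / 8 + p * x - Real.log (D x) with hfdef
  have hfderiv : ∀ x, HasDerivAt f (g x) x := by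
    intro x
    have h1 : HasDerivAt (fun y : ℝ => y ^ 2 / 8 + p * y) (2 * x / 8 + p) x := by
      have := ((hasDerivAt_pow 2 x).div_const 8).add ((hasDerivAt_id x).const_mul p)
      simpa [mul_comm, Pi.add_def] using this
    have h2 : HasDerivAt (fun y => Real.log (D y)) (p * Real.exp x / D x) x :=
      (hDderiv x).log (hD x).ne'
    have := h1.sub h2
    refine this.congr_deriv ?_
    show _ = x / 4 + p - p * Real.exp x / D x
    ring
  have hfmono : MonotoneOn f (Set.Ici 0) := by
    apply monotoneOn_of_hasDerivWithinAt_nonneg (convex_Ici 0)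
      (fun x _ => (hfderiv x).continuousAt.continuousWithinAt)
      (fun x _ => (hfderiv x).hasDerivWithinAt)
    intro x hx
    rw [interior_Ici] at hx
    exact hg_nonneg x (le_of_lt hx)
  have hf0 : f 0 = 0 := by simp [hfdef, hDdef, Real.exp_zero]
  have hfh : 0 ≤ f h := hf0 ▸ hfmono Set.self_mem_Ici hh hh
  -- conclude
  have hlog : Real.log (D h) ≤ h ^ 2 / 8 + p * h := by
    simp only [hfdef] at hfh; linarith
  have : D h ≤ Real.exp (h ^ 2 / 8 + p * h) := by
    rw [← Real.exp_log (hD h)]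
    exact Real.exp_le_exp.2 hlog
  calc Real.exp (-(p * h)) * D h ≤ Real.exp (-(p * h)) * Real.exp (h ^ 2 / 8 + p * h) := by
        exact mul_le_mul_of_nonneg_left this (Real.exp_pos _).le
    _ = Real.exp (h ^ 2 / 8) := by rw [← Real.exp_add]; ring_nf

lemma chord_bound {a b t : ℝ} (ha : a < 0) (hb : 0 < b) (ht : 0 ≤ t) :
    (b * Real.exp (t * a) - a * Real.exp (t * b)) / (b - a) ≤
      Real.exp (t ^ 2 * (b - a) ^ 2 / 8) := by
  have hab : 0 < b - a := by linarith
  set p : ℝ := -a / (b - a) with hp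
  have hp0 : 0 ≤ p := div_nonneg (by linarith) hab.le
  have hp1 : p ≤ 1 := by rw [hp, div_le_one hab]; linarith
  set h : ℝ := t * (b - a) with hh
  have hh0 : 0 ≤ h := mul_nonneg ht hab.le
  have key := hoeff_core hp0 hp1 hh0
  have e1 : -(p * h) = t * a := by rw [hp, hh]; field_simp [hab.ne']
  have e2 : t * b = t * a + h := by rw [hh]; ring
  have e3 : (b * Real.exp (t * a) - a * Real.exp (t * b)) / (b - a)
      = Real.exp (-(p * h)) * (1 - p + p * Real.exp h) := by
    rw [e1, e2, Real.exp_add]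
    rw [hp]
    field_simp
    ring
  have e4 : h ^ 2 / 8 = t ^ 2 * (b - a) ^ 2 / 8 := by rw [hh]; ring
  rw [e3, ← e4]; exact key



lemma chord_pt {a b t x : ℝ} (hab : a < b) (hax : a ≤ x) (hxb : x ≤ b) :
    Real.exp (t * x) ≤ (b * Real.exp (t * a) - a * Real.exp (t * b)) / (b - a)
      + (Real.exp (t * b) - Real.exp (t * a)) / (b - a) * x := by
  have hba : (0:ℝ) < b - a := by linarith
  have hθ : 0 ≤ (b - x) / (b - a) := div_nonneg (by linarith) hba.le
  have hθ' : 0 ≤ (x - a) / (b - a) := div_nonneg (by linarith) hba.le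
  have hsum : (b - x) / (b - a) + (x - a) / (b - a) = 1 := by field_simp; ring
  have hcvx := convexOn_exp.2 (Set.mem_univ (t * a)) (Set.mem_univ (t * b)) hθ hθ' hsum
  simp only [smul_eq_mul] at hcvx
  have harg : (b - x) / (b - a) * (t * a) + (x - a) / (b - a) * (t * b) = t * x := by
    field_simp; ring
  rw [harg] at hcvx
  calc Real.exp (t * x) ≤ (b - x) / (b - a) * Real.exp (t * a)
        + (x - a) / (b - a) * Real.exp (t * b) := hcvx
    _ = (b * Real.exp (t * a) - a * Real.exp (t * b)) / (b - a)
        + (Real.exp (t * b) - Real.exp (t * a)) / (b - a) * x := by field_simp; ring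

theorem stmt_5 {Ω : Type*} [MeasurableSpace Ω] (P : Measure Ω) [IsProbabilityMeasure P]
    (n : ℕ) (A B : Fin n → ℝ) (hA : ∀ k, A k < 0) (hB : ∀ k, 0 < B k)
    (φ : Fin n → Ω → ℝ) (hφm : ∀ k, Measurable (φ k))
    (hφb : ∀ k, ∀ᵐ ω ∂P, A k ≤ φ k ω ∧ φ k ω ≤ B k)
    (hmult : ∀ S : Finset (Fin n), S.Nonempty → ∫ ω, ∏ j ∈ S, φ j ω ∂P = 0)
    (lam : ℝ) (hlam : 0 < lam) :
    (P {ω | lam < ∑ k, φ k ω}).toReal ≤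
      Real.exp (-(2 * lam ^ 2) / ∑ k, (B k - A k) ^ 2) := by
  rcases Nat.eq_zero_or_pos n with hn | hn
  · subst hn
    have hset : {ω : Ω | lam < ∑ k : Fin 0, φ k ω} = ∅ := by
      ext ω; simp; linarith
    rw [hset]
    simp [Real.exp_nonneg]
  -- main case
  have hAB : ∀ k, A k < B k := fun k => lt_trans (hA k) (hB k)
  set σ : ℝ := ∑ k, (B k - A k) ^ 2 with hσdef
  have hσ : 0 < σ :=
    Finset.sum_pos (fun k _ => pow_pos (sub_pos.2 (hAB k)) 2)
      ⟨⟨0, hn⟩, Finset.mem_univ _⟩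
  set t : ℝ := 4 * lam / σ with htdef
  have ht : 0 < t := by positivity
  set α : Fin n → ℝ := fun k =>
    (B k * Real.exp (t * A k) - A k * Real.exp (t * B k)) / (B k - A k) with hαdef
  set β : Fin n → ℝ := fun k =>
    (Real.exp (t * B k) - Real.exp (t * A k)) / (B k - A k) with hβdef
  set G : Ω → ℝ := fun ω => ∏ k, (α k + β k * φ k ω) with hGdef
  have hφb' : ∀ᵐ ω ∂P, ∀ k, A k ≤ φ k ω ∧ φ k ω ≤ B k := ae_all_iff.2 hφb
  have hGbound : ∀ᵐ ω ∂P, Real.exp (t * ∑ k, φ k ω) ≤ G ω := by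
    filter_upwards [hφb'] with ω hω
    have : Real.exp (t * ∑ k, φ k ω) = ∏ k, Real.exp (t * φ k ω) := by
      rw [Finset.mul_sum, Real.exp_sum]
    rw [this]
    exact Finset.prod_le_prod (fun k _ => (Real.exp_pos _).le)
      (fun k _ => chord_pt (hAB k) (hω k).1 (hω k).2)
  have hGnonneg : 0 ≤ᵐ[P] G := by
    filter_upwards [hGbound] with ω hω
    exact le_trans (Real.exp_pos _).le hω
  -- integrability of products
  have hφint : ∀ S : Finset (Fin n), Integrable (fun ω => ∏ k ∈ S, φ k ω) P := by
    intro S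
    have hmeas : Measurable fun ω => ∏ k ∈ S, φ k ω :=
      Finset.measurable_prod _ (fun k _ => hφm k)
    refine Integrable.mono' (integrable_const (∏ k ∈ S, max (B k) (-A k)))
      hmeas.aestronglyMeasurable ?_
    filter_upwards [hφb'] with ω hω
    rw [Real.norm_eq_abs, Finset.abs_prod]
    refine Finset.prod_le_prod (fun k _ => abs_nonneg _) (fun k _ => ?_)
    rcases hω k with ⟨h1, h2⟩
    have := le_max_left (B k) (-A k)
    have := le_max_right (B k) (-A k)
    rw [abs_le]; constructor <;> [linarith; linarith]
  have hGeq : G = fun ω => ∑ S ∈ (Finset.univ : Finset (Fin n)).powerset,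
      (∏ k ∈ S, α k) * ((∏ k ∈ Finset.univ \ S, β k) * ∏ k ∈ Finset.univ \ S, φ k ω) := by
    funext ω
    simp only [hGdef, Finset.prod_add]
    exact Finset.sum_congr rfl fun S _ => by rw [Finset.prod_mul_distrib]
  have hGint : Integrable G P := by
    rw [hGeq]
    exact integrable_finset_sum _ fun S _ => ((hφint _).const_mul _).const_mul _
  have hGint_eq : ∫ ω, G ω ∂P = ∏ k, α k := by
    rw [hGeq]
    rw [integral_finset_sum _ fun S _ => ((hφint _).const_mul _).const_mul _]
    rw [Finset.sum_eq_single Finset.univ]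
    · simp
    · intro S hS hSne
      have hne : (Finset.univ \ S).Nonempty := by
        rw [Finset.sdiff_nonempty]
        intro hsub
        exact hSne (Finset.univ_subset_iff.1 hsub)
      rw [integral_const_mul, integral_const_mul, hmult _ hne]
      ring
    · intro h; exact absurd (Finset.mem_powerset_self _) h
  -- markov
  have hmarkov := mul_meas_ge_le_integral_of_nonneg hGnonneg hGint (Real.exp (t * lam))
  have hmono : P {ω | lam < ∑ k, φ k ω} ≤ P {ω | Real.exp (t * lam) ≤ G ω} := by
    apply measure_mono_ae
    filter_upwards [hGbound] with ω hbd
    intro (hω : lam < ∑ k, φ k ω)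
    show Real.exp (t * lam) ≤ G ω
    refine le_trans (le_trans (Real.exp_le_exp.2 ?_) hbd) le_rfl
    have := hω.le
    nlinarith
  have hprodα : ∏ k, α k ≤ Real.exp (t ^ 2 * σ / 8) := by
    have h1 : ∀ k ∈ Finset.univ, (0:ℝ) ≤ α k := by
      intro k _
      rw [hαdef]
      refine div_nonneg ?_ (by have := hAB k; linarith)
      have e1 := (Real.exp_pos (t * A k)).le
      have e2 := (Real.exp_pos (t * B k)).le
      have := (hA k).le
      have := (hB k).le
      nlinarith
    calc ∏ k, α k ≤ ∏ k, Real.exp (t ^ 2 * (B k - A k) ^ 2 / 8) :=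
          Finset.prod_le_prod h1 (fun k _ => chord_bound (hA k) (hB k) ht.le)
      _ = Real.exp (∑ k, t ^ 2 * (B k - A k) ^ 2 / 8) := (Real.exp_sum _ _).symm
      _ = Real.exp (t ^ 2 * σ / 8) := by
          congr 1
          rw [hσdef, Finset.mul_sum, ← Finset.sum_div]
  -- combine
  have hfin : (P {ω | lam < ∑ k, φ k ω}).toReal ≤
      Real.exp (t ^ 2 * σ / 8) / Real.exp (t * lam) := by
    have h2 : (P {ω | lam < ∑ k, φ k ω}).toReal ≤
        (P {ω | Real.exp (t * lam) ≤ G ω}).toReal :=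
      ENNReal.toReal_mono (measure_ne_top _ _) hmono
    have h3 : Real.exp (t * lam) * (P {ω | Real.exp (t * lam) ≤ G ω}).toReal ≤
        Real.exp (t ^ 2 * σ / 8) := by
      calc _ ≤ ∫ ω, G ω ∂P := hmarkov
        _ = ∏ k, α k := hGint_eq
        _ ≤ _ := hprodα
    have h4 : (P {ω | Real.exp (t * lam) ≤ G ω}).toReal ≤
        Real.exp (t ^ 2 * σ / 8) / Real.exp (t * lam) := by
      rw [le_div_iff₀ (Real.exp_pos _)]
      linarith [h3]
    linarith
  refine le_trans hfin ?_
  rw [← Real.exp_sub]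
  apply le_of_eq
  congr 1
  rw [htdef]
  field_simp
  ring
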